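/- Let Ω ⊂ ℝⁿ be a bounded open set, let γ and b be smooth on a neighborhood of the closure of Ω (real-valued and ℝⁿ-valued respectively), let h > 0, set H := { q ∈ ℝⁿ : |q| ≤ h }, and let R : closure(Ω) × H → ℝⁿ be smooth and satisfy |∂_q^α ∂_x^β R(x,q)| ≤ C₂ |q|^{3−|α|} for all (x,q) ∈ closure(Ω) × H, all multi-indices α with |α| ≤ 3 and all multi-indices β with |β| ≤ 1, for some constant C₂ > 0. Define C⃗(x,p) := γ(x) p + |p|² b(x) + R(x,p). Let u₁ and u₂ be C² functions on a neighborhood of the closure of Ω satisfying ∇·(γ ∇u₁) = 0 and ∇·(γ ∇u₂) + ∇·( b |∇u₁|² ) = 0 in Ω. Then there exist ε₀ > 0 and a constant C > 0 such that for every ε ∈ (0, ε₀), the function u_ε := ε u₁ + ε² u₂ satisfies |∇u_ε(x)| ≤ h and | ∇·( C⃗(x, ∇u_ε(x)) ) | ≤ C ε³ for all x ∈ Ω. -/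

import Mathlib

open scoped BigOperators

noncomputable section

/-- Partial derivative in the j-th coordinate direction. -/
noncomputable def pd {n : ℕ} {E : Type*} [NormedAddCommGroup E] [NormedSpace ℝ E]
    (j : Fin n) (f : (Fin n → ℝ) → E) (x : Fin n → ℝ) : E :=
  fderiv ℝ f x (Pi.single j 1)

/-- Laplacian: sum of second partial derivatives. -/
noncomputable def lap {n : ℕ} {E : Type*} [NormedAddCommGroup E] [NormedSpace ℝ E]
    (f : (Fin n → ℝ) → E) (x : Fin n → ℝ) : E :=
  ∑ j, pd j (fun y => pd j f y) x

/-- Partial derivative of a function of `(x, q) ∈ ℝⁿ × ℝⁿ` in a coordinate direction: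
`Sum.inl i` is the i-th x-direction, `Sum.inr i` is the i-th q-direction. -/
noncomputable def pdxq {n : ℕ} {E : Type*} [NormedAddCommGroup E] [NormedSpace ℝ E]
    (d : Fin n ⊕ Fin n) (f : (Fin n → ℝ) × (Fin n → ℝ) → E)
    (p : (Fin n → ℝ) × (Fin n → ℝ)) : E :=
  fderiv ℝ f p (Sum.elim (fun i => (Pi.single i 1, 0)) (fun i => (0, Pi.single i 1)) d)

/-- Iterated mixed partial derivative along a list of coordinate directions;
a list `L` with `L.countP Sum.isLeft = |β|` x-directions and
`L.countP Sum.isRight = |α|` q-directions represents `∂_q^α ∂_x^β`. -/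
noncomputable def iterPdxq {n : ℕ} {E : Type*} [NormedAddCommGroup E] [NormedSpace ℝ E] :
    List (Fin n ⊕ Fin n) → ((Fin n → ℝ) × (Fin n → ℝ) → E) →
      ((Fin n → ℝ) × (Fin n → ℝ) → E)
  | [], f => f
  | d :: L, f => pdxq d (iterPdxq L f)

/-- Euclidean norm of a vector in `Fin n → ℝ`. -/
noncomputable def enorm' {n : ℕ} (v : Fin n → ℝ) : ℝ := Real.sqrt (∑ j, v j ^ 2)

lemma enorm'_eq_norm {n : ℕ} (v : Fin n → ℝ) :
    enorm' v = ‖(WithLp.equiv 2 (Fin n → ℝ)).symm v‖ := by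
  rw [EuclideanSpace.norm_eq]
  simp [enorm', Real.norm_eq_abs, sq_abs]

lemma enorm'_nonneg {n : ℕ} (v : Fin n → ℝ) : 0 ≤ enorm' v := Real.sqrt_nonneg _

lemma enorm'_comb {n : ℕ} (a c : Fin n → ℝ) (s t : ℝ) (hs : 0 ≤ s) (ht : 0 ≤ t) :
    enorm' (fun i => s * a i + t * c i) ≤ s * enorm' a + t * enorm' c := by
  have h1 : (fun i => s * a i + t * c i) = s • a + t • c := by
    funext i; simp [smul_eq_mul]
  rw [h1]
  simp only [enorm'_eq_norm]
  have h2 : (WithLp.equiv 2 (Fin n → ℝ)).symm (s • a + t • c)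
      = s • (WithLp.equiv 2 (Fin n → ℝ)).symm a + t • (WithLp.equiv 2 (Fin n → ℝ)).symm c := rfl
  rw [h2]
  refine (norm_add_le _ _).trans (le_of_eq ?_)
  rw [norm_smul, norm_smul, Real.norm_eq_abs, Real.norm_eq_abs, abs_of_nonneg hs,
    abs_of_nonneg ht]

lemma continuous_enorm' {n : ℕ} : Continuous (fun v : Fin n → ℝ => enorm' v) := by
  unfold enorm'
  exact (continuous_finset_sum _ fun j _ => ((continuous_apply j).pow 2)).sqrt

lemma pd_congr_nhds {n : ℕ} {f g : (Fin n → ℝ) → ℝ} {x : Fin n → ℝ} (j : Fin n)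
    (h : f =ᶠ[nhds x] g) : pd j f x = pd j g x := by
  unfold pd; rw [h.fderiv_eq]

lemma pd_add {n : ℕ} {f g : (Fin n → ℝ) → ℝ} {x : Fin n → ℝ} (j : Fin n)
    (hf : DifferentiableAt ℝ f x) (hg : DifferentiableAt ℝ g x) :
    pd j (fun y => f y + g y) x = pd j f x + pd j g x := by
  unfold pd; rw [fderiv_fun_add hf hg]; simp

lemma pd_const_mul {n : ℕ} {f : (Fin n → ℝ) → ℝ} {x : Fin n → ℝ} (j : Fin n)
    (hf : DifferentiableAt ℝ f x) (c : ℝ) :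
    pd j (fun y => c * f y) x = c * pd j f x := by
  unfold pd; rw [fderiv_const_mul hf c]; simp

lemma diffAt_of_contDiffOn_one {n : ℕ} {V : Set (Fin n → ℝ)} (hV : IsOpen V)
    {f : (Fin n → ℝ) → ℝ} {x : Fin n → ℝ} (hx : x ∈ V)
    (hf : ContDiffOn ℝ 1 f V) : DifferentiableAt ℝ f x :=
  (hf.differentiableOn one_ne_zero).differentiableAt (hV.mem_nhds hx)

lemma contDiffOn_pd_of_two {n : ℕ} {V : Set (Fin n → ℝ)} (hV : IsOpen V)
    {f : (Fin n → ℝ) → ℝ} (hf : ContDiffOn ℝ 2 f V) (j : Fin n) :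
    ContDiffOn ℝ 1 (pd j f) V := by
  have h1 : ContDiffOn ℝ 1 (fderiv ℝ f) V := hf.fderiv_of_isOpen hV (by norm_num)
  have h2 : pd j f = (ContinuousLinearMap.apply ℝ ℝ (Pi.single j 1 : Fin n → ℝ)) ∘ fderiv ℝ f := rfl
  rw [h2]
  exact (ContinuousLinearMap.apply ℝ ℝ (Pi.single j 1 : Fin n → ℝ)).contDiff.comp_contDiffOn h1

lemma continuousOn_pd_of_one {n : ℕ} {V : Set (Fin n → ℝ)} (hV : IsOpen V)
    {f : (Fin n → ℝ) → ℝ} (hf : ContDiffOn ℝ 1 f V) (j : Fin n) :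
    ContinuousOn (pd j f) V := by
  have h1 : ContinuousOn (fderiv ℝ f) V := hf.continuousOn_fderiv_of_isOpen hV le_rfl
  have h2 : pd j f = (ContinuousLinearMap.apply ℝ ℝ (Pi.single j 1 : Fin n → ℝ)) ∘ fderiv ℝ f := rfl
  rw [h2]
  exact (ContinuousLinearMap.apply ℝ ℝ (Pi.single j 1 : Fin n → ℝ)).continuous.comp_continuousOn h1
theorem stmt_12 {n : ℕ} (Ω : Set (Fin n → ℝ)) (hΩo : IsOpen Ω)
    (hΩb : Bornology.IsBounded Ω)
    -- γ and b are smooth on a neighborhood V of the closure of Ω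
    (V : Set (Fin n → ℝ)) (hV : IsOpen V) (hΩV : closure Ω ⊆ V)
    (γ : (Fin n → ℝ) → ℝ) (b : (Fin n → ℝ) → Fin n → ℝ)
    (hγ : ContDiffOn ℝ (⊤ : ℕ∞) γ V) (hb : ContDiffOn ℝ (⊤ : ℕ∞) b V)
    (h : ℝ) (hh : 0 < h)
    -- R is smooth on (a neighborhood W of) closure Ω × H where H = {q : |q| ≤ h}
    (R : (Fin n → ℝ) → (Fin n → ℝ) → Fin n → ℝ)
    (W : Set ((Fin n → ℝ) × (Fin n → ℝ))) (hW : IsOpen W)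
    (hWsub : (closure Ω) ×ˢ {q : Fin n → ℝ | enorm' q ≤ h} ⊆ W)
    (hR : ContDiffOn ℝ (⊤ : ℕ∞) (fun p => R p.1 p.2) W)
    (C₂ : ℝ) (hC₂ : 0 < C₂)
    -- the bound |∂_q^α ∂_x^β R(x,q)| ≤ C₂ |q|^{3 - |α|} for |α| ≤ 3, |β| ≤ 1
    (hRbound : ∀ L : List (Fin n ⊕ Fin n),
      L.countP Sum.isRight ≤ 3 → L.countP Sum.isLeft ≤ 1 →
      ∀ x ∈ closure Ω, ∀ qv : Fin n → ℝ, enorm' qv ≤ h → ∀ k : Fin n,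
        |iterPdxq L (fun p => R p.1 p.2 k) (x, qv)|
          ≤ C₂ * enorm' qv ^ (3 - L.countP Sum.isRight))
    -- the full coefficient vector field C⃗(x,p) = γ(x) p + |p|² b(x) + R(x,p)
    (Cvec : (Fin n → ℝ) → (Fin n → ℝ) → Fin n → ℝ)
    (hCvec : ∀ x p k, Cvec x p k = γ x * p k + (∑ i, p i ^ 2) * b x k + R x p k)
    -- u₁ and u₂ are C² on V and solve the first- and second-order equations in Ω
    (u₁ u₂ : (Fin n → ℝ) → ℝ)
    (hu₁ : ContDiffOn ℝ 2 u₁ V) (hu₂ : ContDiffOn ℝ 2 u₂ V)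
    (heq₁ : ∀ x ∈ Ω, ∑ j, pd j (fun y => γ y * pd j u₁ y) x = 0)
    (heq₂ : ∀ x ∈ Ω,
      (∑ j, pd j (fun y => γ y * pd j u₂ y) x)
        + (∑ j, pd j (fun y => b y j * ∑ i, (pd i u₁ y) ^ 2) x) = 0) :
    ∃ ε₀ > (0 : ℝ), ∃ C > (0 : ℝ), ∀ ε : ℝ, 0 < ε → ε < ε₀ → ∀ x ∈ Ω,
      enorm' (fun j => pd j (fun y => ε * u₁ y + ε ^ 2 * u₂ y) x) ≤ h ∧
      |∑ j, pd j
          (fun y => Cvec y (fun i => pd i (fun z => ε * u₁ z + ε ^ 2 * u₂ z) y) j) x|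
        ≤ C * ε ^ 3 := by
  classical
  have hKc : IsCompact (closure Ω) := hΩb.isCompact_closure
  have htop1 : (1 : WithTop ℕ∞) ≤ ((⊤ : ℕ∞) : WithTop ℕ∞) := by
    rw [show ((1:WithTop ℕ∞)) = (((1:ℕ∞)) : WithTop ℕ∞) by rfl]; exact_mod_cast le_top
  have hone_le_two : (1 : WithTop ℕ∞) ≤ 2 := by norm_num
  have hγ1 : ContDiffOn ℝ 1 γ V := hγ.of_le htop1
  have hb1 : ∀ j : Fin n, ContDiffOn ℝ 1 (fun y => b y j) V := fun j =>
    (ContinuousLinearMap.proj j : ((Fin n) → ℝ) →L[ℝ] ℝ).contDiff.comp_contDiffOn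
      (hb.of_le htop1)
  have hd1 : ∀ i : Fin n, ContDiffOn ℝ 1 (pd i u₁) V := fun i => contDiffOn_pd_of_two hV hu₁ i
  have hd2 : ∀ i : Fin n, ContDiffOn ℝ 1 (pd i u₂) V := fun i => contDiffOn_pd_of_two hV hu₂ i
  have hS1c : ContDiffOn ℝ 1 (fun y => ∑ i, pd i u₁ y ^ 2) V :=
    ContDiffOn.sum fun i _ => (hd1 i).pow 2
  have hPc : ContDiffOn ℝ 1 (fun y => ∑ i, pd i u₁ y * pd i u₂ y) V :=
    ContDiffOn.sum fun i _ => (hd1 i).mul (hd2 i)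
  have hQc : ContDiffOn ℝ 1 (fun y => ∑ i, pd i u₂ y ^ 2) V :=
    ContDiffOn.sum fun i _ => (hd2 i).pow 2
  have hC1c : ∀ j : Fin n, ContDiffOn ℝ 1
      (fun y => b y j * (2 * ∑ i, pd i u₁ y * pd i u₂ y)) V := fun j =>
    (hb1 j).mul (contDiffOn_const.mul hPc)
  have hC2c : ∀ j : Fin n, ContDiffOn ℝ 1 (fun y => b y j * ∑ i, pd i u₂ y ^ 2) V := fun j =>
    (hb1 j).mul hQc
  -- the big bound function
  obtain ⟨M₀, hM₀⟩ := hKc.exists_bound_of_continuousOn (f := fun z =>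
      enorm' (fun i => pd i u₁ z) + enorm' (fun i => pd i u₂ z)
      + (∑ i, ∑ j, (|pd j (pd i u₁) z| + |pd j (pd i u₂) z|))
      + |∑ j, pd j (fun y => b y j * (2 * ∑ i, pd i u₁ y * pd i u₂ y)) z|
      + |∑ j, pd j (fun y => b y j * ∑ i, pd i u₂ y ^ 2) z|) (by
    apply ContinuousOn.add
    apply ContinuousOn.add
    apply ContinuousOn.add
    apply ContinuousOn.add
    · exact (continuous_enorm'.comp_continuousOn
        (continuousOn_pi.2 fun i => ((hd1 i).continuousOn.mono hΩV))).congr (fun z hz => rfl)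
    · exact (continuous_enorm'.comp_continuousOn
        (continuousOn_pi.2 fun i => ((hd2 i).continuousOn.mono hΩV))).congr (fun z hz => rfl)
    · exact continuousOn_finset_sum _ fun i _ => continuousOn_finset_sum _ fun j _ =>
        (((continuousOn_pd_of_one hV (hd1 i) j).mono hΩV).abs).add
          (((continuousOn_pd_of_one hV (hd2 i) j).mono hΩV).abs)
    · exact ((continuousOn_finset_sum _ fun j _ =>
        (continuousOn_pd_of_one hV (hC1c j) j).mono hΩV).abs)
    · exact ((continuousOn_finset_sum _ fun j _ =>
        (continuousOn_pd_of_one hV (hC2c j) j).mono hΩV).abs))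
  set M : ℝ := max M₀ 1 with hMdef
  have hM1 : (1:ℝ) ≤ M := le_max_right _ _
  have hMpos : (0:ℝ) < M := lt_of_lt_of_le one_pos hM1
  have hcomps : ∀ z ∈ closure Ω,
      enorm' (fun i => pd i u₁ z) ≤ M ∧ enorm' (fun i => pd i u₂ z) ≤ M ∧
      (∀ i j : Fin n, |pd j (pd i u₁) z| ≤ M ∧ |pd j (pd i u₂) z| ≤ M) ∧
      |∑ j, pd j (fun y => b y j * (2 * ∑ i, pd i u₁ y * pd i u₂ y)) z| ≤ M ∧
      |∑ j, pd j (fun y => b y j * ∑ i, pd i u₂ y ^ 2) z| ≤ M := by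
    intro z hz
    have h0 := hM₀ z hz
    rw [Real.norm_eq_abs] at h0
    have hΦ := le_trans (le_abs_self _) (le_trans h0 (le_trans (le_max_left M₀ 1) hMdef.ge))
    have e1 : 0 ≤ enorm' (fun i => pd i u₁ z) := enorm'_nonneg _
    have e2 : 0 ≤ enorm' (fun i => pd i u₂ z) := enorm'_nonneg _
    have e3 : 0 ≤ ∑ i, ∑ j, (|pd j (pd i u₁) z| + |pd j (pd i u₂) z|) :=
      Finset.sum_nonneg fun i _ => Finset.sum_nonneg fun j _ =>
        add_nonneg (abs_nonneg _) (abs_nonneg _)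
    have e4 : 0 ≤ |∑ j, pd j (fun y => b y j * (2 * ∑ i, pd i u₁ y * pd i u₂ y)) z| :=
      abs_nonneg _
    have e5 : 0 ≤ |∑ j, pd j (fun y => b y j * ∑ i, pd i u₂ y ^ 2) z| := abs_nonneg _
    refine ⟨by linarith, by linarith, ?_, by linarith, by linarith⟩
    intro i j
    have hij : |pd j (pd i u₁) z| + |pd j (pd i u₂) z|
        ≤ ∑ i, ∑ j, (|pd j (pd i u₁) z| + |pd j (pd i u₂) z|) := by
      calc |pd j (pd i u₁) z| + |pd j (pd i u₂) z|
          ≤ ∑ j, (|pd j (pd i u₁) z| + |pd j (pd i u₂) z|) :=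
            Finset.single_le_sum (f := fun j => |pd j (pd i u₁) z| + |pd j (pd i u₂) z|)
              (fun j _ => add_nonneg (abs_nonneg _) (abs_nonneg _)) (Finset.mem_univ j)
        _ ≤ _ := Finset.single_le_sum
            (f := fun i => ∑ j, (|pd j (pd i u₁) z| + |pd j (pd i u₂) z|))
            (fun i _ => Finset.sum_nonneg fun j _ => add_nonneg (abs_nonneg _) (abs_nonneg _))
            (Finset.mem_univ i)
    exact ⟨by linarith [abs_nonneg (pd j (pd i u₂) z)],
      by linarith [abs_nonneg (pd j (pd i u₁) z)]⟩
  refine ⟨min 1 (h / (2*M)), lt_min one_pos (div_pos hh (by linarith)),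
    2*M + 8*C₂*M^3*((n:ℝ)*((n:ℝ)+1)), ?_, ?_⟩
  · have hn0 : (0:ℝ) ≤ (n:ℝ) := Nat.cast_nonneg n
    have h3 : (0:ℝ) < M^3 := pow_pos hMpos 3
    have hterm : (0:ℝ) ≤ 8*C₂*M^3*((n:ℝ)*((n:ℝ)+1)) :=
      mul_nonneg (mul_nonneg (mul_nonneg (by norm_num) hC₂.le) h3.le)
        (mul_nonneg hn0 (by linarith))
    linarith
  intro ε hε hεlt x hx
  have hε1 : ε ≤ 1 := le_of_lt (lt_of_lt_of_le hεlt (min_le_left _ _))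
  have hεh : ε < h / (2*M) := lt_of_lt_of_le hεlt (min_le_right _ _)
  have hxc : x ∈ closure Ω := subset_closure hx
  have hxV : x ∈ V := hΩV hxc
  set w : (Fin n → ℝ) → ℝ := fun z => ε * u₁ z + ε ^ 2 * u₂ z with hwdef
  have hw2 : ContDiffOn ℝ 2 w V := (contDiffOn_const.mul hu₁).add (contDiffOn_const.mul hu₂)
  have hdw : ∀ i : Fin n, ContDiffOn ℝ 1 (pd i w) V := fun i => contDiffOn_pd_of_two hV hw2 i
  have hpdw : ∀ y ∈ V, ∀ i : Fin n, pd i w y = ε * pd i u₁ y + ε ^ 2 * pd i u₂ y := by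
    intro y hy i
    have h1 : DifferentiableAt ℝ u₁ y :=
      (hu₁.differentiableOn two_ne_zero).differentiableAt (hV.mem_nhds hy)
    have h2 : DifferentiableAt ℝ u₂ y :=
      (hu₂.differentiableOn two_ne_zero).differentiableAt (hV.mem_nhds hy)
    rw [hwdef]
    rw [pd_add i (h1.const_mul ε) (h2.const_mul (ε^2)), pd_const_mul i h1 ε,
      pd_const_mul i h2 (ε^2)]
  have hg1M := (hcomps x hxc).1
  have hg2M := (hcomps x hxc).2.1
  have hq2εM : enorm' (fun i => pd i w x) ≤ 2*ε*M := by
    have e : (fun i => pd i w x) = fun i => ε * pd i u₁ x + ε^2 * pd i u₂ x :=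
      funext fun i => hpdw x hxV i
    rw [show (fun i => pd i w x) = fun i => ε * pd i u₁ x + ε ^ 2 * pd i u₂ x from e]
    have hcb : enorm' (fun i => ε * pd i u₁ x + ε ^ 2 * pd i u₂ x)
        ≤ ε * enorm' (fun i => pd i u₁ x) + ε ^ 2 * enorm' (fun i => pd i u₂ x) :=
      enorm'_comb (fun i => pd i u₁ x) (fun i => pd i u₂ x) ε (ε^2) hε.le (by positivity)
    have b1 : ε * enorm' (fun i => pd i u₁ x) ≤ ε * M := mul_le_mul_of_nonneg_left hg1M hε.le
    have b2 : ε^2 * enorm' (fun i => pd i u₂ x) ≤ ε^2 * M :=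
      mul_le_mul_of_nonneg_left hg2M (by positivity)
    have b3 : ε^2*M ≤ ε*M := by
      nlinarith [mul_nonneg (mul_nonneg hε.le hMpos.le) (sub_nonneg.2 hε1)]
    linarith
  have hq_h : enorm' (fun i => pd i w x) ≤ h := by
    have h2M : (0:ℝ) < 2*M := by linarith
    have := (lt_div_iff₀ h2M).mp hεh
    nlinarith
  refine ⟨hq_h, ?_⟩
  -- differentiability of the gradient map and the R composition
  have hgd : ∀ i : Fin n, DifferentiableAt ℝ (pd i w) x := fun i =>
    diffAt_of_contDiffOn_one hV hxV (hdw i)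
  have hGd : DifferentiableAt ℝ (fun y (i : Fin n) => pd i w y) x :=
    differentiableAt_pi.2 hgd
  have hφ : DifferentiableAt ℝ (fun y => (y, fun i : Fin n => pd i w y)) x :=
    DifferentiableAt.prodMk differentiableAt_fun_id hGd
  have hPW : ((x, fun i => pd i w x) : (Fin n → ℝ) × (Fin n → ℝ)) ∈ W :=
    hWsub (Set.mem_prod.2 ⟨hxc, hq_h⟩)
  have hRd : DifferentiableAt ℝ (fun p : (Fin n → ℝ) × (Fin n → ℝ) => R p.1 p.2)
      (x, fun i => pd i w x) :=
    (hR.differentiableOn (by simp)).differentiableAt (hW.mem_nhds hPW)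
  have hRjd : ∀ j : Fin n, DifferentiableAt ℝ
      (fun p : (Fin n → ℝ) × (Fin n → ℝ) => R p.1 p.2 j) (x, fun i => pd i w x) :=
    fun j => differentiableAt_pi.1 hRd j
  -- chain rule for the R term
  have hcomp : ∀ j : Fin n, pd j (fun y => R y (fun i => pd i w y) j) x
      = pdxq (Sum.inl j) (fun p => R p.1 p.2 j) (x, fun i => pd i w x)
      + ∑ i, pd j (pd i w) x *
          pdxq (Sum.inr i) (fun p => R p.1 p.2 j) (x, fun i => pd i w x) := by
    intro j
    have e1 : pd j (fun y => R y (fun i => pd i w y) j) x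
        = fderiv ℝ ((fun p : (Fin n → ℝ) × (Fin n → ℝ) => R p.1 p.2 j)
            ∘ (fun y => (y, fun i : Fin n => pd i w y))) x (Pi.single j 1) := rfl
    rw [e1, fderiv_comp x (hRjd j) hφ, ContinuousLinearMap.comp_apply]
    have e2 : fderiv ℝ (fun y => (y, fun i : Fin n => pd i w y)) x (Pi.single j 1)
        = ((Pi.single j 1 : Fin n → ℝ), fun i : Fin n => pd j (pd i w) x) := by
      rw [DifferentiableAt.fderiv_prodMk differentiableAt_fun_id hGd,
        ContinuousLinearMap.prod_apply, fderiv_pi hgd]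
      simp [pd]
    rw [e2]
    have e3 : (((Pi.single j 1 : Fin n → ℝ), fun i : Fin n => pd j (pd i w) x) :
          (Fin n → ℝ) × (Fin n → ℝ))
        = ((Pi.single j 1 : Fin n → ℝ), (0 : Fin n → ℝ))
          + ∑ i : Fin n, pd j (pd i w) x •
              (((0 : Fin n → ℝ), (Pi.single i 1 : Fin n → ℝ)) :
                (Fin n → ℝ) × (Fin n → ℝ)) := by
      have hv : ∑ i : Fin n, pd j (pd i w) x •
          (((0 : Fin n → ℝ), (Pi.single i 1 : Fin n → ℝ)) : (Fin n → ℝ) × (Fin n → ℝ))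
          = (((0 : Fin n → ℝ), fun i : Fin n => pd j (pd i w) x) :
              (Fin n → ℝ) × (Fin n → ℝ)) := by
        rw [Prod.ext_iff]
        constructor
        · rw [Prod.fst_sum]; simp
        · rw [Prod.snd_sum]
          funext k
          rw [Finset.sum_apply]
          simp [Pi.single_apply]
      rw [hv, Prod.mk_add_mk]
      simp
    rw [e3, map_add, map_sum]
    simp only [map_smul, smul_eq_mul]
    rfl
  -- mixed second derivatives of w
  have hd2w : ∀ i j : Fin n, pd j (pd i w) x
      = ε * pd j (pd i u₁) x + ε ^ 2 * pd j (pd i u₂) x := by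
    intro i j
    have hev2 : pd i w =ᶠ[nhds x] (fun y => ε * pd i u₁ y + ε ^ 2 * pd i u₂ y) :=
      Filter.eventuallyEq_of_mem (hV.mem_nhds hxV) (fun y hy => hpdw y hy i)
    rw [pd_congr_nhds j hev2,
      pd_add j ((diffAt_of_contDiffOn_one hV hxV (hd1 i)).const_mul ε)
        ((diffAt_of_contDiffOn_one hV hxV (hd2 i)).const_mul (ε^2)),
      pd_const_mul j (diffAt_of_contDiffOn_one hV hxV (hd1 i)) ε,
      pd_const_mul j (diffAt_of_contDiffOn_one hV hxV (hd2 i)) (ε^2)]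
  have hdd := (hcomps x hxc).2.2.1
  have hvi : ∀ i j : Fin n, |pd j (pd i w) x| ≤ 2*ε*M := by
    intro i j
    rw [hd2w i j]
    have h1 := (hdd i j).1
    have h2 := (hdd i j).2
    have e := abs_add_le (ε * pd j (pd i u₁) x) (ε ^ 2 * pd j (pd i u₂) x)
    rw [abs_mul, abs_mul, abs_of_pos hε, abs_of_pos (pow_pos hε 2)] at e
    nlinarith [abs_nonneg (pd j (pd i u₁) x), abs_nonneg (pd j (pd i u₂) x),
      mul_le_mul_of_nonneg_left h1 hε.le, mul_le_mul_of_nonneg_left h2 (pow_pos hε 2).le,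
      mul_nonneg (mul_nonneg hε.le hMpos.le) (sub_nonneg.2 hε1)]
  have hεM0 : (0:ℝ) ≤ 2*ε*M := mul_nonneg (mul_nonneg (by norm_num) hε.le) hMpos.le
  have hRb1 : ∀ j : Fin n,
      |pdxq (Sum.inl j) (fun p => R p.1 p.2 j) (x, fun i => pd i w x)|
        ≤ C₂ * (2*ε*M)^3 := by
    intro j
    have hb3 := hRbound [Sum.inl j] (by simp) (by simp) x hxc (fun i => pd i w x) hq_h j
    have hc : List.countP Sum.isRight ([Sum.inl j] : List (Fin n ⊕ Fin n)) = 0 := by simp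
    rw [hc] at hb3
    norm_num [iterPdxq] at hb3
    refine le_trans hb3 ?_
    exact mul_le_mul_of_nonneg_left (pow_le_pow_left₀ (enorm'_nonneg _) hq2εM 3) hC₂.le
  have hRb2 : ∀ (i j : Fin n),
      |pdxq (Sum.inr i) (fun p => R p.1 p.2 j) (x, fun i => pd i w x)|
        ≤ C₂ * (2*ε*M)^2 := by
    intro i j
    have hb3 := hRbound [Sum.inr i] (by simp) (by simp) x hxc (fun i => pd i w x) hq_h j
    have hc : List.countP Sum.isRight ([Sum.inr i] : List (Fin n ⊕ Fin n)) = 1 := by simp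
    rw [hc] at hb3
    norm_num [iterPdxq] at hb3
    refine le_trans hb3 ?_
    exact mul_le_mul_of_nonneg_left (pow_le_pow_left₀ (enorm'_nonneg _) hq2εM 2) hC₂.le
  have hTj : ∀ j : Fin n, |pd j (fun y => R y (fun i => pd i w y) j) x|
      ≤ C₂*(2*ε*M)^3 + (n:ℝ)*((2*ε*M)*(C₂*(2*ε*M)^2)) := by
    intro j
    rw [hcomp j]
    refine (abs_add_le _ _).trans (add_le_add (hRb1 j) ?_)
    refine (Finset.abs_sum_le_sum_abs _ _).trans ?_
    have htm : ∀ i : Fin n, |pd j (pd i w) x *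
        pdxq (Sum.inr i) (fun p => R p.1 p.2 j) (x, fun i => pd i w x)|
        ≤ (2*ε*M)*(C₂*(2*ε*M)^2) := by
      intro i
      rw [abs_mul]
      exact mul_le_mul (hvi i j) (hRb2 i j) (abs_nonneg _) hεM0
    refine le_trans (Finset.sum_le_sum fun i _ => htm i) (le_of_eq ?_)
    rw [Finset.sum_const, Finset.card_univ, Fintype.card_fin, nsmul_eq_mul]
  -- pointwise expansion of the coefficient field on V
  have hev : ∀ j : Fin n, ∀ y ∈ V, Cvec y (fun i => pd i w y) j
      = ε * (γ y * pd j u₁ y)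
      + (ε^2 * (γ y * pd j u₂ y)
      + (ε^2 * (b y j * ∑ i, pd i u₁ y ^ 2)
      + (ε^3 * (b y j * (2 * ∑ i, pd i u₁ y * pd i u₂ y))
      + (ε^4 * (b y j * ∑ i, pd i u₂ y ^ 2)
      + R y (fun i => pd i w y) j)))) := by
    intro j y hy
    rw [hCvec]
    have hS : ∑ i, pd i w y ^ 2
        = ε^2 * (∑ i, pd i u₁ y ^ 2) + (ε^3 * (2 * ∑ i, pd i u₁ y * pd i u₂ y)
          + ε^4 * (∑ i, pd i u₂ y ^ 2)) := by
      have h1 : ∑ i, pd i w y ^ 2 = ∑ i, (ε * pd i u₁ y + ε ^ 2 * pd i u₂ y) ^ 2 :=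
        Finset.sum_congr rfl fun i _ => by rw [hpdw y hy i]
      rw [h1]
      simp only [Finset.mul_sum]
      rw [← Finset.sum_add_distrib, ← Finset.sum_add_distrib]
      exact Finset.sum_congr rfl fun i _ => by ring
    rw [hpdw y hy j, hS]
    ring
  -- per-coordinate decomposition of the divergence term
  have hterm : ∀ j : Fin n, pd j (fun y => Cvec y (fun i => pd i w y) j) x
      = ε * pd j (fun y => γ y * pd j u₁ y) x
      + (ε^2 * pd j (fun y => γ y * pd j u₂ y) x
      + (ε^2 * pd j (fun y => b y j * ∑ i, pd i u₁ y ^ 2) x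
      + (ε^3 * pd j (fun y => b y j * (2 * ∑ i, pd i u₁ y * pd i u₂ y)) x
      + (ε^4 * pd j (fun y => b y j * ∑ i, pd i u₂ y ^ 2) x
      + pd j (fun y => R y (fun i => pd i w y) j) x)))) := by
    intro j
    have dA1 : DifferentiableAt ℝ (fun y => γ y * pd j u₁ y) x :=
      diffAt_of_contDiffOn_one hV hxV (hγ1.mul (hd1 j))
    have dA2 : DifferentiableAt ℝ (fun y => γ y * pd j u₂ y) x :=
      diffAt_of_contDiffOn_one hV hxV (hγ1.mul (hd2 j))
    have dB : DifferentiableAt ℝ (fun y => b y j * ∑ i, pd i u₁ y ^ 2) x :=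
      diffAt_of_contDiffOn_one hV hxV ((hb1 j).mul hS1c)
    have dC1 : DifferentiableAt ℝ (fun y => b y j * (2 * ∑ i, pd i u₁ y * pd i u₂ y)) x :=
      diffAt_of_contDiffOn_one hV hxV (hC1c j)
    have dC2 : DifferentiableAt ℝ (fun y => b y j * ∑ i, pd i u₂ y ^ 2) x :=
      diffAt_of_contDiffOn_one hV hxV (hC2c j)
    have dRT : DifferentiableAt ℝ (fun y => R y (fun i => pd i w y) j) x :=
      by have := (hRjd j).comp x hφ; exact this
    have e0 : pd j (fun y => Cvec y (fun i => pd i w y) j) x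
        = pd j (fun y => ε * (γ y * pd j u₁ y)
          + (ε^2 * (γ y * pd j u₂ y)
          + (ε^2 * (b y j * ∑ i, pd i u₁ y ^ 2)
          + (ε^3 * (b y j * (2 * ∑ i, pd i u₁ y * pd i u₂ y))
          + (ε^4 * (b y j * ∑ i, pd i u₂ y ^ 2)
          + R y (fun i => pd i w y) j))))) x :=
      pd_congr_nhds j (Filter.eventuallyEq_of_mem (hV.mem_nhds hxV)
        (fun y hy => hev j y hy))
    rw [e0,
      pd_add j (dA1.const_mul ε) ((dA2.const_mul (ε^2)).fun_add ((dB.const_mul (ε^2)).fun_add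
        ((dC1.const_mul (ε^3)).fun_add ((dC2.const_mul (ε^4)).fun_add dRT)))),
      pd_add j (dA2.const_mul (ε^2)) ((dB.const_mul (ε^2)).fun_add
        ((dC1.const_mul (ε^3)).fun_add ((dC2.const_mul (ε^4)).fun_add dRT))),
      pd_add j (dB.const_mul (ε^2)) ((dC1.const_mul (ε^3)).fun_add
        ((dC2.const_mul (ε^4)).fun_add dRT)),
      pd_add j (dC1.const_mul (ε^3)) ((dC2.const_mul (ε^4)).fun_add dRT),
      pd_add j (dC2.const_mul (ε^4)) dRT,
      pd_const_mul j dA1 ε, pd_const_mul j dA2 (ε^2), pd_const_mul j dB (ε^2),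
      pd_const_mul j dC1 (ε^3), pd_const_mul j dC2 (ε^4)]
  have hsum : ∑ j, pd j (fun y => Cvec y (fun i => pd i w y) j) x
      = ε^3 * (∑ j, pd j (fun y => b y j * (2 * ∑ i, pd i u₁ y * pd i u₂ y)) x)
      + ε^4 * (∑ j, pd j (fun y => b y j * ∑ i, pd i u₂ y ^ 2) x)
      + ∑ j, pd j (fun y => R y (fun i => pd i w y) j) x := by
    rw [Finset.sum_congr rfl fun j _ => hterm j]
    simp only [Finset.sum_add_distrib, ← Finset.mul_sum]
    linear_combination ε * heq₁ x hx + ε^2 * heq₂ x hx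
  have hE1 := (hcomps x hxc).2.2.2.1
  have hE2 := (hcomps x hxc).2.2.2.2
  have hT : |∑ j, pd j (fun y => R y (fun i => pd i w y) j) x|
      ≤ (n:ℝ) * (C₂*(2*ε*M)^3 + (n:ℝ)*((2*ε*M)*(C₂*(2*ε*M)^2))) := by
    refine (Finset.abs_sum_le_sum_abs _ _).trans ?_
    refine le_trans (Finset.sum_le_sum fun j _ => hTj j) (le_of_eq ?_)
    rw [Finset.sum_const, Finset.card_univ, Fintype.card_fin, nsmul_eq_mul]
  have hA : |ε^3 * (∑ j, pd j (fun y => b y j * (2 * ∑ i, pd i u₁ y * pd i u₂ y)) x)|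
      ≤ ε^3 * M := by
    rw [abs_mul, abs_of_pos (pow_pos hε 3)]
    exact mul_le_mul_of_nonneg_left hE1 (pow_pos hε 3).le
  have hB : |ε^4 * (∑ j, pd j (fun y => b y j * ∑ i, pd i u₂ y ^ 2) x)| ≤ ε^3 * M := by
    rw [abs_mul, abs_of_pos (pow_pos hε 4)]
    calc ε^4 * |∑ j, pd j (fun y => b y j * ∑ i, pd i u₂ y ^ 2) x|
        ≤ ε^4 * M := mul_le_mul_of_nonneg_left hE2 (pow_pos hε 4).le
      _ ≤ ε^3 * M := mul_le_mul_of_nonneg_right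
          (pow_le_pow_of_le_one hε.le hε1 (by norm_num)) hMpos.le
  rw [hsum]
  refine le_trans (abs_add_le _ _) (le_trans (add_le_add
    (le_trans (abs_add_le _ _) (add_le_add hA hB)) hT) (le_of_eq ?_))
  ring
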